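/- Let F be a finite field and set r = 1 − 1/|F|. Let m ≥ 3 be a natural number and c > 0 a real number. On a probability space, let W₁, …, W_m be mutually independent real-valued random variables, each with law having probability density z ↦ ν(z − log₂(c/m), r) with respect to Lebesgue measure. Define the estimator Ẑ = φ(1/m, r)^{−m} · m · 2^{(1/m)·Σ_{i=1}^m W_i}. Then Ẑ is unbiased: 𝔼[Ẑ] = c. -/

import Mathlib

open MeasureTheory ProbabilityTheory

/-- The density `ν(z, r)` of the highest position of an F-PCSA subsketch. -/
noncomputable def nu (z r : ℝ) : ℝ :=
  (1 - Real.exp (-(2:ℝ) ^ (-z))) * r *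
    ∏' j : ℕ, (1 - (1 - Real.exp (-(2:ℝ) ^ (-z - ((j : ℝ) + 1)))) * r)

/-- `φ(t, r) = ∫ 2^{tz} ν(z, r) dz`. -/
noncomputable def phi (t r : ℝ) : ℝ := ∫ z : ℝ, (2:ℝ) ^ (t * z) * nu z r

open MeasureTheory ProbabilityTheory Real Filter Set
open scoped NNReal ENNReal

namespace PCSAaux

/-- The `j`-th factor of the infinite product in `ν`. -/
noncomputable def fac (r z : ℝ) (j : ℕ) : ℝ :=
  1 - (1 - Real.exp (-(2:ℝ) ^ (-z - ((j : ℝ) + 1)))) * r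

/-- `q r = 1 - (1 - e⁻¹) r`, a geometric decay rate. -/
noncomputable def q (r : ℝ) : ℝ := 1 - (1 - Real.exp (-1)) * r

lemma one_sub_exp_pos {x : ℝ} (hx : 0 < x) : 0 < 1 - Real.exp (-x) := by
  have h : Real.exp (-x) < Real.exp 0 := Real.exp_lt_exp.mpr (by linarith)
  rw [Real.exp_zero] at h; linarith

lemma one_sub_exp_lt_one {x : ℝ} : 1 - Real.exp (-x) < 1 := by
  have := Real.exp_pos (-x); linarith

lemma one_sub_exp_le {x : ℝ} : 1 - Real.exp (-x) ≤ x := by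
  have := Real.add_one_le_exp (-x); linarith

variable {r z : ℝ}

lemma fac_mem (hr0 : 0 < r) (hr1 : r < 1) (j : ℕ) :
    1 - r ≤ fac r z j ∧ fac r z j ≤ 1 ∧ 0 < fac r z j := by
  have hw : (0:ℝ) < (2:ℝ) ^ (-z - ((j : ℝ) + 1)) := Real.rpow_pos_of_pos two_pos _
  have h0 : 0 < 1 - Real.exp (-(2:ℝ) ^ (-z - ((j : ℝ) + 1))) := one_sub_exp_pos hw
  have h1 : 1 - Real.exp (-(2:ℝ) ^ (-z - ((j : ℝ) + 1))) < 1 := one_sub_exp_lt_one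
  unfold fac
  constructor
  · nlinarith
  constructor
  · nlinarith
  · nlinarith

lemma fac_pos (hr0 : 0 < r) (hr1 : r < 1) (j : ℕ) : 0 < fac r z j :=
  (fac_mem hr0 hr1 j).2.2

lemma log_fac_nonpos (hr0 : 0 < r) (hr1 : r < 1) (j : ℕ) :
    Real.log (fac r z j) ≤ 0 :=
  Real.log_nonpos (fac_pos hr0 hr1 j).le (fac_mem hr0 hr1 j).2.1

lemma rpow_split (z : ℝ) (j : ℕ) :
    (2:ℝ) ^ (-z - ((j : ℝ) + 1)) = (2:ℝ) ^ (-z - 1) * (2⁻¹ : ℝ) ^ j := by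
  have h : (-z - ((j : ℝ) + 1)) = (-z - 1) + (-(j : ℝ)) := by ring
  rw [h, Real.rpow_add two_pos, Real.rpow_neg (by norm_num : (0:ℝ) ≤ 2),
    Real.rpow_natCast, inv_pow]

lemma log_fac_abs_le (hr0 : 0 < r) (hr1 : r < 1) (j : ℕ) :
    |Real.log (fac r z j)| ≤ ((1 - r)⁻¹ * (2:ℝ) ^ (-z - 1)) * (2⁻¹ : ℝ) ^ j := by
  obtain ⟨hlb, hub, hpos⟩ := fac_mem (z := z) hr0 hr1 j
  have hw : (0:ℝ) < (2:ℝ) ^ (-z - ((j : ℝ) + 1)) := Real.rpow_pos_of_pos two_pos _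
  have ha : 1 - Real.exp (-(2:ℝ) ^ (-z - ((j : ℝ) + 1))) ≤ (2:ℝ) ^ (-z - ((j : ℝ) + 1)) :=
    one_sub_exp_le
  have ha0 : 0 ≤ 1 - Real.exp (-(2:ℝ) ^ (-z - ((j : ℝ) + 1))) := (one_sub_exp_pos hw).le
  have habs : |Real.log (fac r z j)| = -Real.log (fac r z j) :=
    abs_of_nonpos (log_fac_nonpos hr0 hr1 j)
  rw [habs]
  have hinv : -Real.log (fac r z j) = Real.log (fac r z j)⁻¹ := (Real.log_inv _).symm
  rw [hinv]
  have h1 : Real.log (fac r z j)⁻¹ ≤ (fac r z j)⁻¹ - 1 :=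
    Real.log_le_sub_one_of_pos (inv_pos.mpr hpos)
  have h2 : (fac r z j)⁻¹ - 1 = (1 - fac r z j) / fac r z j := by
    field_simp
  have h3 : (1 - fac r z j) = (1 - Real.exp (-(2:ℝ) ^ (-z - ((j : ℝ) + 1)))) * r := by
    unfold fac; ring
  have hr' : 0 < 1 - r := by linarith
  have h4 : (1 - fac r z j) / fac r z j ≤ (2:ℝ) ^ (-z - ((j : ℝ) + 1)) / (1 - r) := by
    rw [h3]
    have hnum : (1 - Real.exp (-(2:ℝ) ^ (-z - ((j : ℝ) + 1)))) * r
        ≤ (2:ℝ) ^ (-z - ((j : ℝ) + 1)) := by nlinarith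
    exact div_le_div₀ (le_of_lt hw) hnum hr' hlb
  calc Real.log (fac r z j)⁻¹ ≤ (fac r z j)⁻¹ - 1 := h1
    _ = (1 - fac r z j) / fac r z j := h2
    _ ≤ (2:ℝ) ^ (-z - ((j : ℝ) + 1)) / (1 - r) := h4
    _ = ((1 - r)⁻¹ * (2:ℝ) ^ (-z - 1)) * (2⁻¹ : ℝ) ^ j := by
        rw [rpow_split]; ring

lemma summable_log_fac (hr0 : 0 < r) (hr1 : r < 1) (z : ℝ) :
    Summable fun j : ℕ => Real.log (fac r z j) := by
  have hgeo : Summable fun j : ℕ => ((1 - r)⁻¹ * (2:ℝ) ^ (-z - 1)) * (2⁻¹ : ℝ) ^ j :=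
    (summable_geometric_of_lt_one (by norm_num) (by norm_num)).mul_left _
  have habs : Summable fun j : ℕ => |Real.log (fac r z j)| :=
    Summable.of_nonneg_of_le (fun j => abs_nonneg _) (fun j => log_fac_abs_le hr0 hr1 j) hgeo
  exact habs.of_abs

lemma tprod_fac_eq (hr0 : 0 < r) (hr1 : r < 1) (z : ℝ) :
    (∏' j : ℕ, fac r z j) = Real.exp (∑' j : ℕ, Real.log (fac r z j)) := by
  exact (Real.rexp_tsum_eq_tprod (fun j => fac_pos (z := z) hr0 hr1 j)
    (summable_log_fac hr0 hr1 z)).symm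

lemma tsum_log_fac_nonpos (hr0 : 0 < r) (hr1 : r < 1) (z : ℝ) :
    (∑' j : ℕ, Real.log (fac r z j)) ≤ 0 :=
  tsum_nonpos fun j => log_fac_nonpos hr0 hr1 j

lemma nu_eq (hr0 : 0 < r) (hr1 : r < 1) (z : ℝ) :
    nu z r = (1 - Real.exp (-(2:ℝ) ^ (-z))) * r *
      Real.exp (∑' j : ℕ, Real.log (fac r z j)) := by
  rw [nu, ← tprod_fac_eq hr0 hr1 z]
  rfl

lemma nu_pos (hr0 : 0 < r) (hr1 : r < 1) (z : ℝ) : 0 < nu z r := by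
  rw [nu_eq hr0 hr1 z]
  have := one_sub_exp_pos (Real.rpow_pos_of_pos two_pos (-z))
  positivity

lemma nu_le_rpow (hr0 : 0 < r) (hr1 : r < 1) (z : ℝ) : nu z r ≤ (2:ℝ) ^ (-z) := by
  rw [nu_eq hr0 hr1 z]
  have h0 : 0 ≤ 1 - Real.exp (-(2:ℝ) ^ (-z)) :=
    (one_sub_exp_pos (Real.rpow_pos_of_pos two_pos (-z))).le
  have h1 : 1 - Real.exp (-(2:ℝ) ^ (-z)) ≤ (2:ℝ) ^ (-z) := one_sub_exp_le
  have hE : Real.exp (∑' j : ℕ, Real.log (fac r z j)) ≤ 1 :=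
    Real.exp_le_one_iff.mpr (tsum_log_fac_nonpos hr0 hr1 z)
  have hE0 : 0 < Real.exp (∑' j : ℕ, Real.log (fac r z j)) := Real.exp_pos _
  have s1 : (1 - Real.exp (-(2:ℝ) ^ (-z))) * r * Real.exp (∑' j : ℕ, Real.log (fac r z j))
      ≤ (1 - Real.exp (-(2:ℝ) ^ (-z))) * r :=
    mul_le_of_le_one_right (by positivity) hE
  have s2 : (1 - Real.exp (-(2:ℝ) ^ (-z))) * r ≤ 1 - Real.exp (-(2:ℝ) ^ (-z)) :=
    mul_le_of_le_one_right h0 hr1.le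
  linarith

lemma q_mem (hr0 : 0 < r) (hr1 : r < 1) : 0 < q r ∧ q r < 1 := by
  have h0 : 0 < 1 - Real.exp (-1 : ℝ) := one_sub_exp_pos one_pos
  have h1 : 1 - Real.exp (-1 : ℝ) < 1 := one_sub_exp_lt_one
  unfold q; constructor <;> nlinarith

lemma nu_le_q (hr0 : 0 < r) (hr1 : r < 1) {z : ℝ} (hz : z ≤ 0) :
    nu z r ≤ q r ^ (-z - 1) := by
  obtain ⟨hq0, hq1⟩ := q_mem (r := r) hr0 hr1
  set N : ℕ := ⌊-z⌋₊ with hN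
  set L : ℝ := ∑' j : ℕ, Real.log (fac r z j) with hL
  -- each of the first N factors is at most q r
  have hfq : ∀ j : ℕ, j < N → Real.log (fac r z j) ≤ Real.log (q r) := by
    intro j hj
    have hje : (j : ℝ) + 1 ≤ -z := by
      have h1 : (j : ℝ) + 1 ≤ (N : ℝ) := by exact_mod_cast Nat.succ_le_of_lt hj
      have h2 : (N : ℝ) ≤ -z := Nat.floor_le (by linarith)
      linarith
    have hexp : (1:ℝ) ≤ (2:ℝ) ^ (-z - ((j : ℝ) + 1)) := by
      have := Real.rpow_le_rpow_of_exponent_le (by norm_num : (1:ℝ) ≤ 2)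
        (by linarith : (0:ℝ) ≤ -z - ((j : ℝ) + 1))
      rwa [Real.rpow_zero] at this
    have hle : fac r z j ≤ q r := by
      have hmono : Real.exp (-(2:ℝ) ^ (-z - ((j : ℝ) + 1))) ≤ Real.exp (-1 : ℝ) :=
        Real.exp_le_exp.mpr (by linarith)
      unfold fac q
      nlinarith
    exact Real.log_le_log (fac_pos hr0 hr1 j) hle
  -- tsum is at most the partial sum over `range N`
  have hLle : L ≤ ∑ j ∈ Finset.range N, Real.log (fac r z j) := by
    have hs := summable_log_fac hr0 hr1 z
    have h1 : ∑ j ∈ Finset.range N, (-Real.log (fac r z j))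
        ≤ ∑' j : ℕ, (-Real.log (fac r z j)) :=
      Summable.sum_le_tsum _ (fun j _ => neg_nonneg.mpr (log_fac_nonpos hr0 hr1 j)) hs.neg
    rw [tsum_neg, Finset.sum_neg_distrib] at h1
    linarith
  have hsum : ∑ j ∈ Finset.range N, Real.log (fac r z j) ≤ (N : ℝ) * Real.log (q r) := by
    calc ∑ j ∈ Finset.range N, Real.log (fac r z j)
        ≤ ∑ j ∈ Finset.range N, Real.log (q r) :=
          Finset.sum_le_sum fun j hj => hfq j (Finset.mem_range.mp hj)
      _ = (N : ℝ) * Real.log (q r) := by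
          rw [Finset.sum_const, Finset.card_range, nsmul_eq_mul]
  have hEq : Real.exp L ≤ q r ^ (N : ℝ) := by
    calc Real.exp L ≤ Real.exp ((N : ℝ) * Real.log (q r)) :=
          Real.exp_le_exp.mpr (le_trans hLle hsum)
      _ = q r ^ (N : ℝ) := by
          rw [Real.rpow_def_of_pos hq0]; ring_nf
  have hNz : -z - 1 ≤ (N : ℝ) := by
    have := Nat.sub_one_lt_floor (-z)
    linarith
  have hQ : q r ^ (N : ℝ) ≤ q r ^ (-z - 1) :=
    Real.rpow_le_rpow_of_exponent_ge hq0 hq1.le hNz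
  rw [nu_eq hr0 hr1 z]
  have h0 : 0 ≤ 1 - Real.exp (-(2:ℝ) ^ (-z)) :=
    (one_sub_exp_pos (Real.rpow_pos_of_pos two_pos (-z))).le
  have h1 : 1 - Real.exp (-(2:ℝ) ^ (-z)) ≤ 1 := one_sub_exp_lt_one.le
  have hE0 : 0 < Real.exp L := Real.exp_pos _
  have hAr : (1 - Real.exp (-(2:ℝ) ^ (-z))) * r ≤ 1 := mul_le_one₀ h1 hr0.le hr1.le
  have s1 : (1 - Real.exp (-(2:ℝ) ^ (-z))) * r * Real.exp L ≤ Real.exp L :=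
    mul_le_of_le_one_left hE0.le hAr
  exact le_trans s1 (le_trans hEq hQ)

lemma continuous_two_rpow {g : ℝ → ℝ} (hg : Continuous g) :
    Continuous fun z : ℝ => (2:ℝ) ^ (g z) := by
  have h : (fun z : ℝ => (2:ℝ) ^ (g z)) = fun z => Real.exp (Real.log 2 * g z) :=
    funext fun z => Real.rpow_def_of_pos two_pos _
  rw [h]
  exact Real.continuous_exp.comp (continuous_const.mul hg)

lemma measurable_log_fac (j : ℕ) : Measurable fun z : ℝ => Real.log (fac r z j) := by
  apply Measurable.log
  unfold fac
  have hc : Continuous fun z : ℝ => (2:ℝ) ^ (-z - ((j : ℝ) + 1)) :=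
    continuous_two_rpow (by continuity)
  exact (Continuous.measurable (by continuity))

lemma measurable_nu (hr0 : 0 < r) (hr1 : r < 1) : Measurable fun z : ℝ => nu z r := by
  have hL : Measurable fun z : ℝ => ∑' j : ℕ, Real.log (fac r z j) := by
    apply measurable_of_tendsto_metrizable
      (f := fun n : ℕ => fun z : ℝ => ∑ j ∈ Finset.range n, Real.log (fac r z j))
    · exact fun n => Finset.measurable_sum _ fun j _ => measurable_log_fac j
    · exact tendsto_pi_nhds.mpr fun z =>
        (summable_log_fac hr0 hr1 z).hasSum.tendsto_sum_nat
  have : (fun z : ℝ => nu z r) = fun z : ℝ =>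
      (1 - Real.exp (-(2:ℝ) ^ (-z))) * r *
        Real.exp (∑' j : ℕ, Real.log (fac r z j)) :=
    funext fun z => nu_eq hr0 hr1 z
  rw [this]
  have hc : Continuous fun z : ℝ => (2:ℝ) ^ (-z) := continuous_two_rpow (by continuity)
  have h1 : Measurable fun z : ℝ => (1 - Real.exp (-(2:ℝ) ^ (-z))) * r :=
    Continuous.measurable (by continuity)
  exact h1.mul hL.exp

lemma integrableOn_exp_Iic {b : ℝ} (hb : 0 < b) :
    IntegrableOn (fun x : ℝ => Real.exp (b * x)) (Iic (0:ℝ)) := by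
  have h1 : IntegrableOn (fun x : ℝ => Real.exp (-b * x)) (Ici (0:ℝ)) :=
    (integrableOn_Ici_iff_integrableOn_Ioi).mpr (exp_neg_integrableOn_Ioi 0 hb)
  have h2 := (MeasurePreserving.integrableOn_comp_preimage
    (Measure.measurePreserving_neg (volume : Measure ℝ))
    (Homeomorph.neg ℝ).measurableEmbedding).mpr h1
  have hpre : (Neg.neg ⁻¹' Ici (0:ℝ) : Set ℝ) = Iic 0 := by
    ext x; simp
  have heq : ((fun x : ℝ => Real.exp (-b * x)) ∘ Neg.neg) = fun x : ℝ => Real.exp (b * x) := by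
    funext x; simp [Function.comp, mul_comm]
  rw [hpre, heq] at h2
  exact h2

lemma measurable_kernel (hr0 : 0 < r) (hr1 : r < 1) (t : ℝ) :
    Measurable fun z : ℝ => (2:ℝ) ^ (t * z) * nu z r := by
  have h1 : Measurable fun z : ℝ => (2:ℝ) ^ (t * z) :=
    (continuous_two_rpow (by continuity)).measurable
  exact h1.mul (measurable_nu hr0 hr1)

lemma kernel_nonneg (hr0 : 0 < r) (hr1 : r < 1) (t z : ℝ) :
    0 ≤ (2:ℝ) ^ (t * z) * nu z r :=
  mul_nonneg (Real.rpow_nonneg (by norm_num) _) (nu_pos hr0 hr1 z).le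

lemma integrable_kernel (hr0 : 0 < r) (hr1 : r < 1) {t : ℝ} (ht0 : 0 < t) (ht1 : t < 1) :
    Integrable fun z : ℝ => (2:ℝ) ^ (t * z) * nu z r := by
  obtain ⟨hq0, hq1⟩ := q_mem (r := r) hr0 hr1
  have hmeas := measurable_kernel hr0 hr1 t
  rw [← integrableOn_univ, ← Set.Iic_union_Ioi (a := (0:ℝ))]
  apply IntegrableOn.union
  · -- on Iic 0, dominate by (q r)⁻¹ * exp ((t log 2 - log (q r)) x)
    have hlq : Real.log (q r) < 0 := Real.log_neg hq0 hq1
    have hb : 0 < t * Real.log 2 - Real.log (q r) := by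
      have := Real.log_pos (by norm_num : (1:ℝ) < 2)
      nlinarith
    have hg : IntegrableOn
        (fun x : ℝ => (q r)⁻¹ * Real.exp ((t * Real.log 2 - Real.log (q r)) * x))
        (Iic (0:ℝ)) :=
      (integrableOn_exp_Iic hb).const_mul _
    apply Integrable.mono' hg hmeas.aestronglyMeasurable.restrict
    rw [ae_restrict_iff' measurableSet_Iic]
    apply ae_of_all
    intro z hz
    have hz0 : z ≤ 0 := hz
    rw [Real.norm_of_nonneg (kernel_nonneg hr0 hr1 t z)]
    have h1 : (2:ℝ) ^ (t * z) * nu z r ≤ (2:ℝ) ^ (t * z) * q r ^ (-z - 1) := by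
      apply mul_le_mul_of_nonneg_left (nu_le_q hr0 hr1 hz0)
        (Real.rpow_nonneg (by norm_num) _)
    have h2 : (2:ℝ) ^ (t * z) * q r ^ (-z - 1)
        = (q r)⁻¹ * Real.exp ((t * Real.log 2 - Real.log (q r)) * z) := by
      rw [Real.rpow_def_of_pos two_pos, Real.rpow_def_of_pos hq0, ← Real.exp_add]
      rw [show Real.log 2 * (t * z) + Real.log (q r) * (-z - 1)
        = (t * Real.log 2 - Real.log (q r)) * z + (- Real.log (q r)) by ring]
      rw [Real.exp_add, Real.exp_neg, Real.exp_log hq0]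
      ring
    linarith
  · -- on Ioi 0, dominate by exp (-(1 - t) * log 2 * z)
    have hb : 0 < (1 - t) * Real.log 2 := by
      have := Real.log_pos (by norm_num : (1:ℝ) < 2)
      nlinarith
    have hg : IntegrableOn (fun x : ℝ => Real.exp (-((1 - t) * Real.log 2) * x))
        (Ioi (0:ℝ)) := exp_neg_integrableOn_Ioi 0 hb
    apply Integrable.mono' hg hmeas.aestronglyMeasurable.restrict
    apply ae_of_all
    intro z
    rw [Real.norm_of_nonneg (kernel_nonneg hr0 hr1 t z)]
    have h1 : (2:ℝ) ^ (t * z) * nu z r ≤ (2:ℝ) ^ (t * z) * (2:ℝ) ^ (-z) :=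
      mul_le_mul_of_nonneg_left (nu_le_rpow hr0 hr1 z)
        (Real.rpow_nonneg (by norm_num) _)
    have h2 : (2:ℝ) ^ (t * z) * (2:ℝ) ^ (-z)
        = Real.exp (-((1 - t) * Real.log 2) * z) := by
      rw [← Real.rpow_add two_pos, Real.rpow_def_of_pos two_pos]
      congr 1; ring
    linarith

lemma phi_pos (hr0 : 0 < r) (hr1 : r < 1) {t : ℝ} (ht0 : 0 < t) (ht1 : t < 1) :
    0 < phi t r := by
  rw [phi]
  rw [integral_pos_iff_support_of_nonneg_ae
    (ae_of_all _ fun z => kernel_nonneg hr0 hr1 t z) (integrable_kernel hr0 hr1 ht0 ht1)]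
  have hsupp : (Function.support fun z : ℝ => (2:ℝ) ^ (t * z) * nu z r) = Set.univ := by
    apply Set.eq_univ_of_forall
    intro z
    exact ne_of_gt (mul_pos (Real.rpow_pos_of_pos two_pos _) (nu_pos hr0 hr1 z))
  rw [hsupp]
  simp

end PCSAaux

/-- Unbiasedness of the F-PCSA estimator: if `W₁, …, W_m` are independent,
each with density `z ↦ ν(z − log₂(c/m), 1 − |F|⁻¹)`, then the estimator
`Ẑ = φ(1/m, r)^{−m} m 2^{(1/m) ∑ Wᵢ}` satisfies `𝔼[Ẑ] = c`. -/
theorem stmt_7 (F : Type*) [Field F] [Fintype F]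
    (m : ℕ) (hm : 3 ≤ m) (c : ℝ) (hc : 0 < c)
    (Ω : Type*) [MeasurableSpace Ω] (μ : Measure Ω) [IsProbabilityMeasure μ]
    (W : Fin m → Ω → ℝ) (hWmeas : ∀ i, Measurable (W i))
    (hindep : iIndepFun W μ)
    (hWlaw : ∀ i, μ.map (W i) = volume.withDensity
      (fun z => ENNReal.ofReal (nu (z - Real.logb 2 (c / m)) (1 - (Fintype.card F : ℝ)⁻¹)))) :
    (∫ ω, (phi (1 / m) (1 - (Fintype.card F : ℝ)⁻¹) ^ m)⁻¹ * m *
        (2:ℝ) ^ ((1 / (m:ℝ)) * ∑ i, W i ω) ∂μ) = c := by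
  classical
  set r : ℝ := 1 - (Fintype.card F : ℝ)⁻¹ with hr
  have hcard : (2:ℝ) ≤ (Fintype.card F : ℝ) := by
    have h := Fintype.one_lt_card (α := F)
    exact_mod_cast h
  have hcpos : (0:ℝ) < (Fintype.card F : ℝ) := by linarith
  have hr0 : 0 < r := by
    have h2 : (Fintype.card F : ℝ)⁻¹ ≤ 2⁻¹ := by
      apply inv_anti₀ (by norm_num) hcard
    rw [hr]; norm_num at h2 ⊢; linarith
  have hr1 : r < 1 := by
    have : 0 < (Fintype.card F : ℝ)⁻¹ := inv_pos.mpr hcpos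
    rw [hr]; linarith
  have hm0 : (0:ℝ) < (m:ℝ) := by
    have : (3:ℝ) ≤ (m:ℝ) := by exact_mod_cast hm
    linarith
  set s : ℝ := Real.logb 2 (c / m) with hs
  set t : ℝ := Real.log 2 * (1 / (m:ℝ)) with ht
  have ht0 : (0:ℝ) < 1 / (m:ℝ) := by positivity
  have ht1 : (1:ℝ) / (m:ℝ) < 1 := by
    rw [div_lt_one hm0]
    have : (3:ℝ) ≤ (m:ℝ) := by exact_mod_cast hm
    linarith
  have hphi : 0 < phi (1 / (m:ℝ)) r := PCSAaux.phi_pos hr0 hr1 ht0 ht1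
  set K : ℝ := (phi (1 / (m:ℝ)) r ^ m)⁻¹ * (m:ℝ) with hK
  -- Step 1: rewrite the integrand via mgf
  have h1 : (∫ ω, K * (2:ℝ) ^ ((1 / (m:ℝ)) * ∑ i, W i ω) ∂μ)
      = K * mgf (∑ i, W i) μ t := by
    have hfun : (fun ω => K * (2:ℝ) ^ ((1 / (m:ℝ)) * ∑ i, W i ω))
        = fun ω => K * Real.exp (t * (∑ i, W i) ω) := by
      funext ω
      rw [Real.rpow_def_of_pos two_pos, Finset.sum_apply]
      congr 1
      rw [ht]; ring
    rw [hfun, integral_const_mul]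
    rfl
  -- Step 2: mgf of the sum is the product of mgfs
  have h2 : mgf (∑ i, W i) μ t = ∏ i, mgf (W i) μ t :=
    hindep.mgf_sum hWmeas Finset.univ
  -- Step 3: compute each individual mgf
  have h3 : ∀ i, mgf (W i) μ t = Real.exp (t * s) * phi (1 / (m:ℝ)) r := by
    intro i
    have hd : Measurable fun z : ℝ => nu (z - s) r :=
      (PCSAaux.measurable_nu hr0 hr1).comp (measurable_id.sub measurable_const)
    have hcont : Continuous fun x : ℝ => Real.exp (t * x) := by continuity
    have e1 : mgf (W i) μ t = ∫ x, Real.exp (t * x) ∂(μ.map (W i)) :=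
      (integral_map (hWmeas i).aemeasurable hcont.aestronglyMeasurable).symm
    rw [e1, hWlaw i]
    have e2 : (fun z : ℝ => ENNReal.ofReal (nu (z - s) r))
        = fun z : ℝ => ((Real.toNNReal (nu (z - s) r) : ℝ≥0) : ℝ≥0∞) := rfl
    rw [e2, integral_withDensity_eq_integral_smul hd.real_toNNReal]
    have e3 : (fun z : ℝ => (Real.toNNReal (nu (z - s) r) : ℝ≥0) • Real.exp (t * z))
        = fun z : ℝ => (fun y : ℝ => nu y r * Real.exp (t * (y + s))) (z - s) := by
      funext z
      simp only [NNReal.smul_def, Real.coe_toNNReal _ (PCSAaux.nu_pos hr0 hr1 _).le,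
        smul_eq_mul, sub_add_cancel]
    rw [e3, integral_sub_right_eq_self (fun y : ℝ => nu y r * Real.exp (t * (y + s))) s]
    have e4 : (fun y : ℝ => nu y r * Real.exp (t * (y + s)))
        = fun y : ℝ => Real.exp (t * s) * ((2:ℝ) ^ ((1 / (m:ℝ)) * y) * nu y r) := by
      funext y
      rw [Real.rpow_def_of_pos two_pos,
        show t * (y + s) = Real.log 2 * (1 / (m:ℝ) * y) + t * s by rw [ht]; ring,
        Real.exp_add]
      ring
    rw [e4, integral_const_mul]
    rfl
  -- Step 4: put everything together
  have h4 : ∏ i, mgf (W i) μ t = (c / m) * phi (1 / (m:ℝ)) r ^ m := by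
    have hprod : ∏ i : Fin m, (Real.exp (t * s) * phi (1 / (m:ℝ)) r)
        = (Real.exp (t * s) * phi (1 / (m:ℝ)) r) ^ m := by
      rw [Finset.prod_const, Finset.card_univ, Fintype.card_fin]
    have hexp : Real.exp (t * s) ^ m = c / m := by
      rw [← Real.exp_nat_mul]
      have : (m:ℝ) * (t * s) = Real.log 2 * s := by
        rw [ht]; field_simp
      rw [this, ← Real.rpow_def_of_pos two_pos, hs,
        Real.rpow_logb two_pos (by norm_num) (div_pos hc hm0)]
    calc ∏ i, mgf (W i) μ t
        = ∏ i : Fin m, (Real.exp (t * s) * phi (1 / (m:ℝ)) r) :=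
          Finset.prod_congr rfl fun i _ => h3 i
      _ = (Real.exp (t * s) * phi (1 / (m:ℝ)) r) ^ m := hprod
      _ = (c / m) * phi (1 / (m:ℝ)) r ^ m := by rw [mul_pow, hexp]
  rw [h1, h2, h4, hK]
  have hphin : phi (1 / (m:ℝ)) r ^ m ≠ 0 := pow_ne_zero m hphi.ne'
  field_simp
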